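/- Martingale structure and exact variance of the bilinear CUSUM statistic (Part I of the proof of Lemma B.5). Let N and T be positive integers, (d_{t,l}), 1 <= t,l <= T, real weights, and for each t in [T] let a^{(t)}, b^{(t)} be random vectors in R^N all of whose 2 N T coordinates {a^{(t)}_k, b^{(t)}_k} are jointly independent, mean zero, square integrable, and satisfy Var(a^{(t)}_k) = Var(b^{(t)}_k) = sigma_k^2 for every t (the variances do not depend on t). Set Upsilon = sum_{t=1}^T sum_{l=1}^T d_{t,l} (a^{(t)})^T b^{(l)} and v_t = (a^{(t)})^T ( sum_{l=1}^T d_{t,l} b^{(l)} ), and let F_t be the sigma-algebra generated by b^{(1)},...,b^{(T)}, a^{(1)},...,a^{(t)}. Then: (1) E(Upsilon) = 0; (2) Upsilon = sum_{t=1}^T v_t and E( v_t | F_{t-1} ) = 0 for every t, so (v_t) is a martingale difference sequence with respect to (F_t); (3) Var(Upsilon) = ( sum_{t=1}^T sum_{l=1}^T d_{t,l}^2 ) sum_{k=1}^N sigma_k^4; and (4) sum_{t=1}^T E[ E( v_t^2 | F_{t-1} ) ] = Var(Upsilon). -/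

import Mathlib

open MeasureTheory ProbabilityTheory

namespace MosaicStmt15

/-- The filtration `F_j`: the σ-algebra generated by `b⁽¹⁾,…,b⁽ᵀ⁾` together with
`a⁽ˢ⁾` for (0-indexed) `s < j`. -/
def filtrF {Ω : Type*} (N T : ℕ) (a b : Fin T → Fin N → Ω → ℝ) (j : ℕ) :
    MeasurableSpace Ω :=
  (⨆ l : Fin T, MeasurableSpace.comap (fun ω k => b l k ω) MeasurableSpace.pi) ⊔
    ⨆ s : Fin T, ⨆ _ : (s : ℕ) < j,
      MeasurableSpace.comap (fun ω k => a s k ω) MeasurableSpace.pi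

/-- **Martingale structure and exact variance of the bilinear CUSUM statistic**
(Part I of the proof of Lemma B.5).  With all `2NT` coordinates of the random vectors
`a⁽ᵗ⁾, b⁽ᵗ⁾ ∈ ℝᴺ` jointly independent, mean zero, square integrable, and
`Var(a⁽ᵗ⁾_k) = Var(b⁽ᵗ⁾_k) = σ_k²`: setting
`Υ = ∑_{t,l} d_{t,l} (a⁽ᵗ⁾)ᵀ b⁽ˡ⁾` and `v_t = (a⁽ᵗ⁾)ᵀ (∑_l d_{t,l} b⁽ˡ⁾)`,
(1) `E Υ = 0`; (2) `Υ = ∑_t v_t` and `E(v_t | F_{t-1}) = 0`;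
(3) `Var Υ = (∑_{t,l} d_{t,l}²)(∑_k σ_k⁴)`; (4) `∑_t E[E(v_t² | F_{t-1})] = Var Υ`. -/
theorem bilinear_cusum_martingale
    {Ω : Type*} [m0 : MeasurableSpace Ω] (μ : Measure Ω) [IsProbabilityMeasure μ]
    (N T : ℕ) (hN : 1 ≤ N) (hT : 1 ≤ T)
    (d : Fin T → Fin T → ℝ) (σsq : Fin N → ℝ)
    (a b : Fin T → Fin N → Ω → ℝ)
    (hmeas : ∀ t k, Measurable (a t k) ∧ Measurable (b t k))
    (hindep : iIndepFun
      (fun q : Bool × Fin T × Fin N =>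
        if q.1 then a q.2.1 q.2.2 else b q.2.1 q.2.2) μ)
    (hL2 : ∀ t k, MemLp (a t k) 2 μ ∧ MemLp (b t k) 2 μ)
    (hmean : ∀ t k, (∫ ω, a t k ω ∂μ = 0) ∧ (∫ ω, b t k ω ∂μ = 0))
    (hvar : ∀ t k, variance (a t k) μ = σsq k ∧ variance (b t k) μ = σsq k) :
    (∫ ω, (∑ t, ∑ l, d t l * ∑ k, a t k ω * b l k ω) ∂μ = 0) ∧
    (∀ ω, (∑ t, ∑ l, d t l * ∑ k, a t k ω * b l k ω)
        = ∑ t, ∑ k, a t k ω * ∑ l, d t l * b l k ω) ∧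
    (∀ t : Fin T,
      μ[fun ω => ∑ k, a t k ω * ∑ l, d t l * b l k ω | filtrF N T a b t.val]
        =ᵐ[μ] 0) ∧
    (variance (fun ω => ∑ t, ∑ l, d t l * ∑ k, a t k ω * b l k ω) μ
        = (∑ t, ∑ l, (d t l) ^ 2) * ∑ k, (σsq k) ^ 2) ∧
    (∑ t : Fin T,
        ∫ ω, (μ[fun ω' => (∑ k, a t k ω' * ∑ l, d t l * b l k ω') ^ 2 |
          filtrF N T a b t.val]) ω ∂μ
      = variance (fun ω => ∑ t, ∑ l, d t l * ∑ k, a t k ω * b l k ω) μ) := by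
  classical
  set Z : Bool × Fin T × Fin N → Ω → ℝ :=
    (fun q : Bool × Fin T × Fin N =>
      if q.1 then a q.2.1 q.2.2 else b q.2.1 q.2.2) with hZdef
  have hma : ∀ t k, Measurable (a t k) := fun t k => (hmeas t k).1
  have hmb : ∀ t k, Measurable (b t k) := fun t k => (hmeas t k).2
  have hZmeas : ∀ q, Measurable (Z q) := by
    rintro ⟨c, t, k⟩
    cases c
    · simpa [Z] using hmb t k
    · simpa [Z] using hma t k
  have hab : ∀ (t l : Fin T) (k k' : Fin N), IndepFun (a t k) (b l k') μ := by
    intro t l k k'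
    exact hindep.indepFun (i := (true, t, k)) (j := (false, l, k')) (by simp)
  have haa : ∀ {t t' : Fin T} {k k' : Fin N}, (t, k) ≠ (t', k') →
      IndepFun (a t k) (a t' k') μ := by
    intro t t' k k' h
    exact hindep.indepFun (i := (true, t, k)) (j := (true, t', k'))
      (by simpa [Prod.ext_iff] using h)
  have hbb : ∀ {t t' : Fin T} {k k' : Fin N}, (t, k) ≠ (t', k') →
      IndepFun (b t k) (b t' k') μ := by
    intro t t' k k' h
    exact hindep.indepFun (i := (false, t, k)) (j := (false, t', k'))
      (by simpa [Prod.ext_iff] using h)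
  have habab : ∀ (t t' l l' : Fin T) (k k' : Fin N),
      IndepFun (fun ω => a t k ω * a t' k' ω) (fun ω => b l k ω * b l' k' ω) μ := by
    intro t t' l l' k k'
    exact hindep.indepFun_mul_mul hZmeas (true, t, k) (true, t', k') (false, l, k)
      (false, l', k') (by simp) (by simp) (by simp) (by simp)

  have hIa : ∀ t k, Integrable (a t k) μ := fun t k => (hL2 t k).1.integrable one_le_two
  have hIb : ∀ t k, Integrable (b t k) μ := fun t k => (hL2 t k).2.integrable one_le_two
  have hIaa : ∀ (t t' : Fin T) (k k' : Fin N),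
      Integrable (fun ω => a t k ω * a t' k' ω) μ := by
    intro t t' k k'
    by_cases h : (t, k) = (t', k')
    · obtain ⟨rfl, rfl⟩ := Prod.mk.injEq .. ▸ Prod.ext_iff.mp h
      simpa [pow_two] using (hL2 t k).1.integrable_sq
    · exact (haa h).integrable_mul (hIa t k) (hIa t' k')
  have hIbb : ∀ (t t' : Fin T) (k k' : Fin N),
      Integrable (fun ω => b t k ω * b t' k' ω) μ := by
    intro t t' k k'
    by_cases h : (t, k) = (t', k')
    · obtain ⟨rfl, rfl⟩ := Prod.mk.injEq .. ▸ Prod.ext_iff.mp h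
      simpa [pow_two] using (hL2 t k).2.integrable_sq
    · exact (hbb h).integrable_mul (hIb t k) (hIb t' k')
  have hInt4 : ∀ (t t' l l' : Fin T) (k k' : Fin N),
      Integrable (fun ω => (a t k ω * b l k ω) * (a t' k' ω * b l' k' ω)) μ := by
    intro t t' l l' k k'
    have h := (habab t t' l l' k k').integrable_mul (hIaa t t' k k') (hIbb l l' k k')
    exact h.congr (Filter.Eventually.of_forall fun ω => by simp only [Pi.mul_apply]; ring)
  have hEab : ∀ (t l : Fin T) (k k' : Fin N), ∫ ω, a t k ω * b l k' ω ∂μ = 0 := by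
    intro t l k k'
    have h := (hab t l k k').integral_mul_eq_mul_integral (hIa t k).1 (hIb l k').1
    simpa [(hmean t k).1] using h
  have hEaa : ∀ (t t' : Fin T) (k k' : Fin N),
      ∫ ω, a t k ω * a t' k' ω ∂μ = if t = t' ∧ k = k' then σsq k else 0 := by
    intro t t' k k'
    by_cases h : t = t' ∧ k = k'
    · obtain ⟨rfl, rfl⟩ := h
      rw [if_pos ⟨rfl, rfl⟩]
      have hv := (hvar t k).1
      rw [variance_eq_sub (hL2 t k).1, (hmean t k).1] at hv
      calc ∫ ω, a t k ω * a t k ω ∂μ = μ[(a t k) ^ 2] := by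
            refine integral_congr_ae (Filter.Eventually.of_forall fun ω => ?_)
            simp [pow_two]
        _ = σsq k := by simpa using hv
    · rw [if_neg h]
      have hne : (t, k) ≠ (t', k') := by simpa [Prod.ext_iff] using h
      have h2 := (haa hne).integral_mul_eq_mul_integral (hIa t k).1 (hIa t' k').1
      simpa [(hmean t k).1] using h2
  have hEbb : ∀ (t t' : Fin T) (k k' : Fin N),
      ∫ ω, b t k ω * b t' k' ω ∂μ = if t = t' ∧ k = k' then σsq k else 0 := by
    intro t t' k k'
    by_cases h : t = t' ∧ k = k'
    · obtain ⟨rfl, rfl⟩ := h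
      rw [if_pos ⟨rfl, rfl⟩]
      have hv := (hvar t k).2
      rw [variance_eq_sub (hL2 t k).2, (hmean t k).2] at hv
      calc ∫ ω, b t k ω * b t k ω ∂μ = μ[(b t k) ^ 2] := by
            refine integral_congr_ae (Filter.Eventually.of_forall fun ω => ?_)
            simp [pow_two]
        _ = σsq k := by simpa using hv
    · rw [if_neg h]
      have hne : (t, k) ≠ (t', k') := by simpa [Prod.ext_iff] using h
      have h2 := (hbb hne).integral_mul_eq_mul_integral (hIb t k).1 (hIb t' k').1
      simpa [(hmean t k).2] using h2
  have E4 : ∀ (t t' l l' : Fin T) (k k' : Fin N),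
      ∫ ω, (a t k ω * b l k ω) * (a t' k' ω * b l' k' ω) ∂μ
        = if t = t' ∧ l = l' ∧ k = k' then (σsq k) ^ 2 else 0 := by
    intro t t' l l' k k'
    have hEq : ∫ ω, (a t k ω * b l k ω) * (a t' k' ω * b l' k' ω) ∂μ
        = (∫ ω, a t k ω * a t' k' ω ∂μ) * ∫ ω, b l k ω * b l' k' ω ∂μ := by
      have h := (habab t t' l l' k k').integral_mul_eq_mul_integral
        (hIaa t t' k k').1 (hIbb l l' k k').1
      calc ∫ ω, (a t k ω * b l k ω) * (a t' k' ω * b l' k' ω) ∂μ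
          = ∫ ω, ((fun ω => a t k ω * a t' k' ω) * fun ω => b l k ω * b l' k' ω) ω ∂μ := by
            refine integral_congr_ae (Filter.Eventually.of_forall fun ω => ?_)
            simp only [Pi.mul_apply]; ring
        _ = _ := h
    rw [hEq, hEaa, hEbb]
    by_cases hk : k = k'
    · subst hk
      by_cases ht : t = t' <;> by_cases hl : l = l' <;> simp [ht, hl, pow_two]
    · simp [hk]

  set g : Fin T × Fin T × Fin N → Ω → ℝ :=
    (fun p ω => d p.1 p.2.1 * (a p.1 p.2.2 ω * b p.2.1 p.2.2 ω)) with hgdef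
  have hIg : ∀ p q, Integrable (fun ω => g p ω * g q ω) μ := by
    intro p q
    have h := (hInt4 p.1 q.1 p.2.1 q.2.1 p.2.2 q.2.2).const_mul (d p.1 p.2.1 * d q.1 q.2.1)
    exact h.congr (Filter.Eventually.of_forall fun ω => by simp only [g]; ring)
  have hEg : ∀ p q, ∫ ω, g p ω * g q ω ∂μ
      = if p = q then (d p.1 p.2.1) ^ 2 * (σsq p.2.2) ^ 2 else 0 := by
    intro p q
    have hrw : ∫ ω, g p ω * g q ω ∂μ
        = (d p.1 p.2.1 * d q.1 q.2.1) *
          ∫ ω, (a p.1 p.2.2 ω * b p.2.1 p.2.2 ω) * (a q.1 q.2.2 ω * b q.2.1 q.2.2 ω) ∂μ := by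
      rw [← integral_const_mul]
      refine integral_congr_ae (Filter.Eventually.of_forall fun ω => ?_)
      simp only [g]; ring
    rw [hrw, E4]
    by_cases h : p = q
    · subst h
      simp [pow_two]
    · have hne : ¬(p.1 = q.1 ∧ p.2.1 = q.2.1 ∧ p.2.2 = q.2.2) := by
        simpa [Prod.ext_iff] using h
      simp [h, hne]
  have key : ∀ P : Finset (Fin T × Fin T × Fin N),
      ∫ ω, (∑ p ∈ P, g p ω) * (∑ q ∈ P, g q ω) ∂μ
        = ∑ p ∈ P, (d p.1 p.2.1) ^ 2 * (σsq p.2.2) ^ 2 := by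
    intro P
    have h1 : (fun ω => (∑ p ∈ P, g p ω) * (∑ q ∈ P, g q ω))
        = fun ω => ∑ p ∈ P, ∑ q ∈ P, g p ω * g q ω := by
      funext ω; rw [Finset.sum_mul_sum]
    rw [h1, integral_finset_sum _ (fun p _ => integrable_finset_sum _ fun q _ => hIg p q)]
    refine Finset.sum_congr rfl fun p hp => ?_
    rw [integral_finset_sum _ (fun q _ => hIg p q)]
    rw [Finset.sum_congr rfl fun q _ => hEg p q]
    simp [Finset.sum_ite_eq, hp]
  have hUps : ∀ ω, (∑ t, ∑ l, d t l * ∑ k, a t k ω * b l k ω)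
      = ∑ p : Fin T × Fin T × Fin N, g p ω := by
    intro ω
    simp [g, Fintype.sum_prod_type, Finset.mul_sum]
  have hIg1 : ∀ p, Integrable (g p) μ := by
    intro p
    exact ((hab p.1 p.2.1 p.2.2 p.2.2).integrable_mul (hIa _ _) (hIb _ _)).const_mul _
  have part1 : ∫ ω, (∑ t, ∑ l, d t l * ∑ k, a t k ω * b l k ω) ∂μ = 0 := by
    have hf : (fun ω => ∑ t, ∑ l, d t l * ∑ k, a t k ω * b l k ω)
        = fun ω => ∑ p : Fin T × Fin T × Fin N, g p ω := funext hUps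
    rw [hf, integral_finset_sum _ fun p _ => hIg1 p]
    refine Finset.sum_eq_zero fun p _ => ?_
    have : ∫ ω, g p ω ∂μ
        = d p.1 p.2.1 * ∫ ω, a p.1 p.2.2 ω * b p.2.1 p.2.2 ω ∂μ := integral_const_mul _ _
    rw [this, hEab, mul_zero]
  have part2 : ∀ ω, (∑ t, ∑ l, d t l * ∑ k, a t k ω * b l k ω)
      = ∑ t, ∑ k, a t k ω * ∑ l, d t l * b l k ω := by
    intro ω
    refine Finset.sum_congr rfl fun t _ => ?_
    simp only [Finset.mul_sum]
    rw [Finset.sum_comm]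
    refine Finset.sum_congr rfl fun k _ => ?_
    exact Finset.sum_congr rfl fun l _ => by ring
  have hL2ab : ∀ (t l : Fin T) (k : Fin N), MemLp (fun ω => a t k ω * b l k ω) 2 μ := by
    intro t l k
    refine (memLp_two_iff_integrable_sq
      ((hma t k).mul (hmb l k)).aestronglyMeasurable).2 ?_
    have hsq : IndepFun (fun ω => a t k ω ^ 2) (fun ω => b l k ω ^ 2) μ :=
      (hab t l k k).comp (measurable_id.pow_const 2) (measurable_id.pow_const 2)
    have h := hsq.integrable_mul (hL2 t k).1.integrable_sq (hL2 l k).2.integrable_sq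
    exact h.congr (Filter.Eventually.of_forall fun ω => by simp only [Pi.mul_apply]; ring)
  have hL2U : MemLp (fun ω => ∑ p : Fin T × Fin T × Fin N, g p ω) 2 μ := by
    refine memLp_finset_sum _ fun p _ => ?_
    exact (hL2ab p.1 p.2.1 p.2.2).const_mul _
  have part3 : variance (fun ω => ∑ t, ∑ l, d t l * ∑ k, a t k ω * b l k ω) μ
      = (∑ t, ∑ l, (d t l) ^ 2) * ∑ k, (σsq k) ^ 2 := by
    have hf : (fun ω => ∑ t, ∑ l, d t l * ∑ k, a t k ω * b l k ω)
        = fun ω => ∑ p : Fin T × Fin T × Fin N, g p ω := funext hUps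
    rw [hf, variance_eq_sub hL2U]
    have h2 : μ[(fun ω => ∑ p : Fin T × Fin T × Fin N, g p ω) ^ 2]
        = ∑ p : Fin T × Fin T × Fin N, (d p.1 p.2.1) ^ 2 * (σsq p.2.2) ^ 2 := by
      rw [← key Finset.univ]
      refine integral_congr_ae (Filter.Eventually.of_forall fun ω => ?_)
      simp [pow_two]
    have h0 : μ[fun ω => ∑ p : Fin T × Fin T × Fin N, g p ω] = 0 := by
      rw [← hf]; exact part1
    rw [h2, h0]
    have hz : (0:ℝ) ^ 2 = 0 := by norm_num
    rw [hz, sub_zero, Fintype.sum_prod_type, Finset.sum_mul]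
    refine Finset.sum_congr rfl fun t _ => ?_
    rw [Fintype.sum_prod_type, Finset.sum_mul]
    exact Finset.sum_congr rfl fun l _ => by rw [Finset.mul_sum]

  -- σ-algebra bookkeeping
  have hcomap_b : ∀ l : Fin T,
      MeasurableSpace.comap (fun ω k => b l k ω) MeasurableSpace.pi
        = ⨆ k : Fin N, MeasurableSpace.comap (b l k) inferInstance := by
    intro l
    conv_lhs => rw [show (MeasurableSpace.pi : MeasurableSpace (Fin N → ℝ))
      = ⨆ k : Fin N, MeasurableSpace.comap (fun x => x k) inferInstance from rfl]
    rw [MeasurableSpace.comap_iSup]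
    exact iSup_congr fun k => MeasurableSpace.comap_comp.trans rfl
  have hcomap_a : ∀ s : Fin T,
      MeasurableSpace.comap (fun ω k => a s k ω) MeasurableSpace.pi
        = ⨆ k : Fin N, MeasurableSpace.comap (a s k) inferInstance := by
    intro s
    conv_lhs => rw [show (MeasurableSpace.pi : MeasurableSpace (Fin N → ℝ))
      = ⨆ k : Fin N, MeasurableSpace.comap (fun x => x k) inferInstance from rfl]
    rw [MeasurableSpace.comap_iSup]
    exact iSup_congr fun k => MeasurableSpace.comap_comp.trans rfl
  have hle : ∀ j, filtrF N T a b j ≤ m0 := by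
    intro j
    refine sup_le (iSup_le fun l => ?_) (iSup_le fun s => iSup_le fun _ => ?_)
    · exact (measurable_pi_lambda _ fun k => hmb l k).comap_le
    · exact (measurable_pi_lambda _ fun k => hma s k).comap_le
  haveI hSF : ∀ j, SigmaFinite (μ.trim (hle j)) := fun j => inferInstance
  have hb_filtr : ∀ (j : ℕ) (l : Fin T) (k : Fin N),
      Measurable[filtrF N T a b j] (b l k) := by
    intro j l k
    refine Measurable.of_comap_le ?_
    calc MeasurableSpace.comap (b l k) inferInstance
        ≤ ⨆ k : Fin N, MeasurableSpace.comap (b l k) inferInstance :=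
          le_iSup (fun k : Fin N => MeasurableSpace.comap (b l k) inferInstance) k
      _ = MeasurableSpace.comap (fun ω k => b l k ω) MeasurableSpace.pi := (hcomap_b l).symm
      _ ≤ ⨆ l' : Fin T, MeasurableSpace.comap (fun ω k => b l' k ω) MeasurableSpace.pi :=
          le_iSup (fun l' : Fin T =>
            MeasurableSpace.comap (fun ω k => b l' k ω) MeasurableSpace.pi) l
      _ ≤ filtrF N T a b j := le_sup_left
  have hiI : iIndep (fun q : Bool × Fin T × Fin N =>
      MeasurableSpace.comap (Z q) inferInstance) μ := hindep.iIndep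
  have hIndep_main : ∀ t : Fin T,
      Indep (MeasurableSpace.comap (fun ω (k : Fin N) => a t k ω) MeasurableSpace.pi)
        (filtrF N T a b t.val) μ := by
    intro t
    have hD : Disjoint {q : Bool × Fin T × Fin N | q.1 = true ∧ q.2.1 = t}
        {q : Bool × Fin T × Fin N | q.1 = false ∨ ((q.2.1 : Fin T) : ℕ) < (t : ℕ)} := by
      rw [Set.disjoint_left]
      rintro ⟨c, s, k⟩ ⟨hc, hs⟩ h2
      simp only at hc hs
      subst hc; subst hs
      rcases h2 with h | h
      · simp at h
      · simp only at h; omega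
    have hmain := indep_iSup_of_disjoint (fun q => (hZmeas q).comap_le) hiI hD
    have hA : MeasurableSpace.comap (fun ω (k : Fin N) => a t k ω) MeasurableSpace.pi
        ≤ ⨆ q ∈ {q : Bool × Fin T × Fin N | q.1 = true ∧ q.2.1 = t},
            MeasurableSpace.comap (Z q) inferInstance := by
      rw [hcomap_a t]
      refine iSup_le fun k => ?_
      exact le_biSup (fun q : Bool × Fin T × Fin N =>
        MeasurableSpace.comap (Z q) inferInstance)
        (show ((true, t, k) : Bool × Fin T × Fin N)
          ∈ {q : Bool × Fin T × Fin N | q.1 = true ∧ q.2.1 = t} from ⟨rfl, rfl⟩)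
    have hF : filtrF N T a b t.val
        ≤ ⨆ q ∈ {q : Bool × Fin T × Fin N | q.1 = false ∨ ((q.2.1 : Fin T) : ℕ) < (t : ℕ)},
            MeasurableSpace.comap (Z q) inferInstance := by
      refine sup_le (iSup_le fun l => ?_) (iSup_le fun s => iSup_le fun hs => ?_)
      · rw [hcomap_b l]
        refine iSup_le fun k => ?_
        exact le_biSup (fun q : Bool × Fin T × Fin N =>
          MeasurableSpace.comap (Z q) inferInstance)
          (show ((false, l, k) : Bool × Fin T × Fin N)
            ∈ {q : Bool × Fin T × Fin N |
                q.1 = false ∨ ((q.2.1 : Fin T) : ℕ) < (t : ℕ)} from Or.inl rfl)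
      · rw [hcomap_a s]
        refine iSup_le fun k => ?_
        exact le_biSup (fun q : Bool × Fin T × Fin N =>
          MeasurableSpace.comap (Z q) inferInstance)
          (show ((true, s, k) : Bool × Fin T × Fin N)
            ∈ {q : Bool × Fin T × Fin N |
                q.1 = false ∨ ((q.2.1 : Fin T) : ℕ) < (t : ℕ)} from Or.inr hs)
    exact indep_of_indep_of_le_right (indep_of_indep_of_le_left hmain hA) hF
  have hcond_a : ∀ (t : Fin T) (k : Fin N),
      μ[a t k | filtrF N T a b t.val] =ᵐ[μ] fun _ => (0 : ℝ) := by
    intro t k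
    have hM : StronglyMeasurable[MeasurableSpace.comap (fun ω (k : Fin N) => a t k ω)
        MeasurableSpace.pi] (a t k) := by
      refine Measurable.stronglyMeasurable (Measurable.of_comap_le ?_)
      rw [hcomap_a t]
      exact le_iSup (fun k : Fin N =>
        MeasurableSpace.comap (a t k) inferInstance) k
    have h := condExp_indep_eq (measurable_pi_lambda _ fun k => hma t k).comap_le
      (hle t.val) hM (hIndep_main t)
    simpa [(hmean t k).1] using h
  have hS_sm : ∀ (t : Fin T) (k : Fin N), StronglyMeasurable[filtrF N T a b t.val]
      (fun ω => ∑ l, d t l * b l k ω) := by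
    intro t k
    exact Measurable.stronglyMeasurable
      (Finset.measurable_sum _ fun l _ => (hb_filtr t.val l k).const_mul _)
  have hS_int : ∀ (t : Fin T) (k : Fin N),
      Integrable (fun ω => ∑ l, d t l * b l k ω) μ :=
    fun t k => integrable_finset_sum _ fun l _ => (hIb l k).const_mul _
  have hindep_aS : ∀ (t : Fin T) (k : Fin N),
      IndepFun (a t k) (fun ω => ∑ l, d t l * b l k ω) μ := by
    intro t k
    have hA : MeasurableSpace.comap (a t k) inferInstance
        ≤ MeasurableSpace.comap (fun ω (k : Fin N) => a t k ω) MeasurableSpace.pi := by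
      rw [hcomap_a t]
      exact le_iSup (fun k : Fin N =>
        MeasurableSpace.comap (a t k) inferInstance) k
    have hSle : MeasurableSpace.comap (fun ω => ∑ l, d t l * b l k ω) inferInstance
        ≤ filtrF N T a b t.val := (hS_sm t k).measurable.comap_le
    exact indep_of_indep_of_le_right (indep_of_indep_of_le_left (hIndep_main t) hA) hSle
  have hterm_int : ∀ (t : Fin T) (k : Fin N),
      Integrable (fun ω => a t k ω * ∑ l, d t l * b l k ω) μ :=
    fun t k => (hindep_aS t k).integrable_mul (hIa t k) (hS_int t k)
  have hterm0 : ∀ (t : Fin T) (k : Fin N),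
      μ[fun ω => a t k ω * ∑ l, d t l * b l k ω | filtrF N T a b t.val] =ᵐ[μ] 0 := by
    intro t k
    have hre : (fun ω => a t k ω * ∑ l, d t l * b l k ω)
        = (fun ω => ∑ l, d t l * b l k ω) * a t k := by
      funext ω; simp only [Pi.mul_apply]; ring
    have hint : Integrable ((fun ω => ∑ l, d t l * b l k ω) * a t k) μ :=
      (hterm_int t k).congr (Filter.Eventually.of_forall fun ω => by
        simp only [Pi.mul_apply]; ring)
    have hmul := condExp_mul_of_stronglyMeasurable_left (hS_sm t k) hint (hIa t k)
    rw [hre]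
    refine hmul.trans ?_
    filter_upwards [hcond_a t k] with ω hω
    simp [hω]
  have part4 : ∀ t : Fin T,
      μ[fun ω => ∑ k, a t k ω * ∑ l, d t l * b l k ω | filtrF N T a b t.val] =ᵐ[μ] 0 := by
    intro t
    have h1 : (fun ω => ∑ k, a t k ω * ∑ l, d t l * b l k ω)
        = ∑ k : Fin N, fun ω => a t k ω * ∑ l, d t l * b l k ω := by
      funext ω; simp [Finset.sum_apply]
    rw [h1]
    refine (condExp_finset_sum (fun k _ => hterm_int t k) _).trans ?_
    filter_upwards [ae_all_iff.mpr fun k : Fin N => hterm0 t k] with ω hω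
    simp only [Finset.sum_apply, Pi.zero_apply]
    exact Finset.sum_eq_zero fun k _ => hω k

  have hvt : ∀ (t : Fin T) (ω : Ω), (∑ k, a t k ω * ∑ l, d t l * b l k ω)
      = ∑ p ∈ ({t} ×ˢ (Finset.univ : Finset (Fin T × Fin N))), g p ω := by
    intro t ω
    rw [Finset.sum_product, Finset.sum_singleton, Fintype.sum_prod_type]
    simp only [g]
    rw [Finset.sum_comm]
    refine Finset.sum_congr rfl fun k _ => ?_
    rw [Finset.mul_sum]
    exact Finset.sum_congr rfl fun l _ => by ring
  have hstep : ∀ t : Fin T,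
      ∫ ω, (μ[fun ω' => (∑ k, a t k ω' * ∑ l, d t l * b l k ω') ^ 2 |
          filtrF N T a b t.val]) ω ∂μ
        = ∑ l, ∑ k : Fin N, (d t l) ^ 2 * (σsq k) ^ 2 := by
    intro t
    rw [integral_condExp (hle t.val)]
    calc ∫ ω, (∑ k, a t k ω * ∑ l, d t l * b l k ω) ^ 2 ∂μ
        = ∫ ω, (∑ p ∈ ({t} ×ˢ (Finset.univ : Finset (Fin T × Fin N))), g p ω)
            * ∑ q ∈ ({t} ×ˢ (Finset.univ : Finset (Fin T × Fin N))), g q ω ∂μ := by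
          refine integral_congr_ae (Filter.Eventually.of_forall fun ω => ?_)
          simp only [pow_two, hvt t]
      _ = ∑ p ∈ ({t} ×ˢ (Finset.univ : Finset (Fin T × Fin N))),
            (d p.1 p.2.1) ^ 2 * (σsq p.2.2) ^ 2 := key _
      _ = ∑ l, ∑ k : Fin N, (d t l) ^ 2 * (σsq k) ^ 2 := by
          rw [Finset.sum_product, Finset.sum_singleton, Fintype.sum_prod_type]
  have part5 : (∑ t : Fin T,
      ∫ ω, (μ[fun ω' => (∑ k, a t k ω' * ∑ l, d t l * b l k ω') ^ 2 |
        filtrF N T a b t.val]) ω ∂μ)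
      = variance (fun ω => ∑ t, ∑ l, d t l * ∑ k, a t k ω * b l k ω) μ := by
    rw [Finset.sum_congr rfl fun t _ => hstep t, part3]
    rw [Finset.sum_mul]
    refine Finset.sum_congr rfl fun t _ => ?_
    rw [Finset.sum_mul]
    exact Finset.sum_congr rfl fun l _ => by rw [Finset.mul_sum]
  exact ⟨part1, part2, part4, part3, part5⟩


end MosaicStmt15
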